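/- Let μ₀, μ₁ ∈ ℝ and β > 0, and let p and q be the Laplace densities with common scale β and locations μ₀ and μ₁ respectively. Then the Bhattacharyya coefficient satisfies ∫_ℝ √(p(x) q(x)) dx = e^{−u} (1 + u), where u = |μ₁ − μ₀|/(2β). -/

import Mathlib

open Real MeasureTheory Set Filter Topology

private lemma lap_integrableOn_Ioi {β : ℝ} (hβ : 0 < β) (k c : ℝ) :
    IntegrableOn (fun x : ℝ => Real.exp ((k - x) / β)) (Ioi c) := by
  have hβ' : β ≠ 0 := ne_of_gt hβ
  have h : (fun x : ℝ => Real.exp ((k - x) / β))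
      = fun x : ℝ => Real.exp (k / β) * Real.exp (-(1 / β) * x) := by
    funext x
    rw [← Real.exp_add]
    congr 1
    field_simp
    ring
  rw [h]
  exact (exp_neg_integrableOn_Ioi c (by positivity)).const_mul _

private lemma lap_integrableOn_Iic {β : ℝ} (hβ : 0 < β) (k c : ℝ) :
    IntegrableOn (fun x : ℝ => Real.exp ((x - k) / β)) (Iic c) := by
  have h_map : (volume.restrict (Ici (-c))).map Neg.neg
      = (volume : Measure ℝ).restrict (Iic c) := by
    conv => rhs; rw [← Measure.map_neg_eq_self (volume : Measure ℝ),
      measurableEmbedding_neg.restrict_map]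
    simp
  rw [IntegrableOn, ← h_map, measurableEmbedding_neg.integrable_map_iff]
  have h : ((fun x : ℝ => Real.exp ((x - k) / β)) ∘ Neg.neg)
      = fun x : ℝ => Real.exp ((-k - x) / β) := by
    funext x
    simp only [Function.comp_apply]
    ring_nf
  rw [h, ← IntegrableOn, integrableOn_Ici_iff_integrableOn_Ioi]
  exact lap_integrableOn_Ioi hβ (-k) (-c)

private lemma lap_int_Ioi {β : ℝ} (hβ : 0 < β) (k c : ℝ) :
    ∫ x in Ioi c, Real.exp ((k - x) / β) = β * Real.exp ((k - c) / β) := by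
  have hβ' : β ≠ 0 := ne_of_gt hβ
  have hderiv : ∀ x ∈ Ici c, HasDerivAt (fun x : ℝ => -β * Real.exp ((k - x) / β))
      (Real.exp ((k - x) / β)) x := by
    intro x _
    have h1 : HasDerivAt (fun x : ℝ => (k - x) / β) (-1 / β) x := by
      simpa using ((hasDerivAt_id x).const_sub k).div_const β
    have h2 := h1.exp.const_mul (-β)
    refine h2.congr_deriv ?_
    have h1b : -β * (-1 / β) = 1 := by rw [neg_div, neg_mul_neg, mul_one_div_cancel hβ']
    linear_combination (Real.exp ((k - x) / β)) * h1b
  have htend : Tendsto (fun x : ℝ => -β * Real.exp ((k - x) / β)) atTop (𝓝 0) := by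
    have h2 : Tendsto (fun x : ℝ => (k - x) / β) atTop atBot := by
      apply Tendsto.atBot_div_const hβ
      exact Tendsto.congr (fun x => by ring)
        (tendsto_atBot_add_const_left atTop k (tendsto_neg_atTop_atBot (G := ℝ)))
    have h3 := (Real.tendsto_exp_atBot.comp h2).const_mul (-β)
    simpa using h3
  have hres := integral_Ioi_of_hasDerivAt_of_tendsto' hderiv
    (lap_integrableOn_Ioi hβ k c) htend
  rw [hres]
  ring_nf

private lemma lap_int_Iic {β : ℝ} (hβ : 0 < β) (k c : ℝ) :
    ∫ x in Iic c, Real.exp ((x - k) / β) = β * Real.exp ((c - k) / β) := by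
  have h : ∀ x : ℝ, Real.exp ((x - k) / β)
      = (fun y : ℝ => Real.exp ((-k - y) / β)) (-x) := by
    intro x
    simp only []
    ring_nf
  calc ∫ x in Iic c, Real.exp ((x - k) / β)
      = ∫ x in Iic c, (fun y : ℝ => Real.exp ((-k - y) / β)) (-x) :=
        setIntegral_congr_fun measurableSet_Iic fun x _ => h x
    _ = ∫ x in Ioi (-c), Real.exp ((-k - x) / β) :=
        integral_comp_neg_Iic c (fun y : ℝ => Real.exp ((-k - y) / β))
    _ = β * Real.exp ((c - k) / β) := by
        rw [lap_int_Ioi hβ (-k) (-c)]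
        ring_nf

private lemma bhattacharyya_laplace_aux (μ₀ μ₁ β : ℝ) (hβ : 0 < β) (hle : μ₀ ≤ μ₁) :
    ∫ x : ℝ, Real.sqrt ((1 / (2 * β) * Real.exp (-|x - μ₀| / β))
        * (1 / (2 * β) * Real.exp (-|x - μ₁| / β)))
      = Real.exp (-(|μ₁ - μ₀| / (2 * β))) * (1 + |μ₁ - μ₀| / (2 * β)) := by
  have hβ' : β ≠ 0 := ne_of_gt hβ
  set m : ℝ := (μ₀ + μ₁) / 2 with hm
  have hg : ∀ x : ℝ, Real.sqrt ((1 / (2 * β) * Real.exp (-|x - μ₀| / β))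
        * (1 / (2 * β) * Real.exp (-|x - μ₁| / β)))
      = 1 / (2 * β) * Real.exp (-(|x - μ₀| + |x - μ₁|) / (2 * β)) := by
    intro x
    have hpos : (0:ℝ) ≤ 1 / (2 * β) := by positivity
    have h1 : (1 / (2 * β) * Real.exp (-|x - μ₀| / β))
        * (1 / (2 * β) * Real.exp (-|x - μ₁| / β))
        = (1 / (2 * β)) ^ 2 * Real.exp (-|x - μ₀| / β + -|x - μ₁| / β) := by
      rw [Real.exp_add]; ring
    rw [h1, Real.sqrt_mul (by positivity), Real.sqrt_sq hpos, ← Real.exp_half]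
    congr 1
    field_simp
    ring
  simp only [hg]
  set g : ℝ → ℝ := fun x => 1 / (2 * β) * Real.exp (-(|x - μ₀| + |x - μ₁|) / (2 * β))
    with hgdef
  have hIic : ∀ x ∈ Iic μ₀, g x = 1 / (2 * β) * Real.exp ((x - m) / β) := by
    intro x hx
    simp only [mem_Iic] at hx
    show 1 / (2 * β) * Real.exp (-(|x - μ₀| + |x - μ₁|) / (2 * β)) = _
    rw [abs_of_nonpos (by linarith : x - μ₀ ≤ 0),
      abs_of_nonpos (by linarith : x - μ₁ ≤ 0)]
    congr 1
    rw [hm]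
    field_simp
    ring
  have hIoc : ∀ x ∈ Ioc μ₀ μ₁, g x
      = 1 / (2 * β) * Real.exp (-((μ₁ - μ₀) / (2 * β))) := by
    intro x hx
    obtain ⟨hx1, hx2⟩ := hx
    show 1 / (2 * β) * Real.exp (-(|x - μ₀| + |x - μ₁|) / (2 * β)) = _
    rw [abs_of_nonneg (by linarith : (0:ℝ) ≤ x - μ₀),
      abs_of_nonpos (by linarith : x - μ₁ ≤ 0)]
    congr 1
    ring
  have hIoi : ∀ x ∈ Ioi μ₁, g x = 1 / (2 * β) * Real.exp ((m - x) / β) := by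
    intro x hx
    simp only [mem_Ioi] at hx
    show 1 / (2 * β) * Real.exp (-(|x - μ₀| + |x - μ₁|) / (2 * β)) = _
    rw [abs_of_nonneg (by linarith : (0:ℝ) ≤ x - μ₀),
      abs_of_nonneg (by linarith : (0:ℝ) ≤ x - μ₁)]
    congr 1
    rw [hm]
    field_simp
    ring
  have hint1 : IntegrableOn g (Iic μ₀) :=
    IntegrableOn.congr_fun ((lap_integrableOn_Iic hβ m μ₀).const_mul (1 / (2 * β)))
      (fun x hx => (hIic x hx).symm) measurableSet_Iic
  have hint2 : IntegrableOn g (Ioc μ₀ μ₁) :=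
    IntegrableOn.congr_fun (integrableOn_const measure_Ioc_lt_top.ne)
      (fun x hx => (hIoc x hx).symm) measurableSet_Ioc
  have hint3 : IntegrableOn g (Ioi μ₁) :=
    IntegrableOn.congr_fun ((lap_integrableOn_Ioi hβ m μ₁).const_mul (1 / (2 * β)))
      (fun x hx => (hIoi x hx).symm) measurableSet_Ioi
  have hint12 : IntegrableOn g (Iic μ₁) := by
    have := hint1.union hint2
    rwa [Iic_union_Ioc_eq_Iic hle] at this
  have hsplit : ∫ x, g x = ((∫ x in Iic μ₀, g x) + ∫ x in Ioc μ₀ μ₁, g x)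
      + ∫ x in Ioi μ₁, g x := by
    rw [← intervalIntegral.integral_Iic_add_Ioi hint12 hint3]
    congr 1
    rw [← Iic_union_Ioc_eq_Iic hle,
      setIntegral_union (Iic_disjoint_Ioc le_rfl) measurableSet_Ioc hint1 hint2]
  have I1 : ∫ x in Iic μ₀, g x = 1 / (2 * β) * (β * Real.exp ((μ₀ - m) / β)) := by
    rw [setIntegral_congr_fun measurableSet_Iic hIic, integral_const_mul,
      lap_int_Iic hβ m μ₀]
  have I2 : ∫ x in Ioc μ₀ μ₁, g x
      = (μ₁ - μ₀) * (1 / (2 * β) * Real.exp (-((μ₁ - μ₀) / (2 * β)))) := by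
    rw [setIntegral_congr_fun measurableSet_Ioc hIoc, setIntegral_const,
      Real.volume_real_Ioc_of_le hle, smul_eq_mul]
  have I3 : ∫ x in Ioi μ₁, g x = 1 / (2 * β) * (β * Real.exp ((m - μ₁) / β)) := by
    rw [setIntegral_congr_fun measurableSet_Ioi hIoi, integral_const_mul,
      lap_int_Ioi hβ m μ₁]
  have e1 : (μ₀ - m) / β = -((μ₁ - μ₀) / (2 * β)) := by
    rw [hm]; field_simp; ring
  have e2 : (m - μ₁) / β = -((μ₁ - μ₀) / (2 * β)) := by
    rw [hm]; field_simp; ring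
  rw [hsplit, I1, I2, I3, e1, e2, abs_of_nonneg (by linarith : (0:ℝ) ≤ μ₁ - μ₀)]
  field_simp
  ring

/-- the Bhattacharyya coefficient of two Laplace densities with common scale
`β` and locations `μ₀`, `μ₁` equals `e^{−u}(1 + u)` with `u = |μ₁ − μ₀|/(2β)`
(integral w.r.t. Lebesgue measure on ℝ). -/
theorem bhattacharyya_laplace (μ₀ μ₁ β : ℝ) (hβ : 0 < β) :
    ∫ x : ℝ, Real.sqrt ((1 / (2 * β) * Real.exp (-|x - μ₀| / β))
        * (1 / (2 * β) * Real.exp (-|x - μ₁| / β)))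
      = Real.exp (-(|μ₁ - μ₀| / (2 * β))) * (1 + |μ₁ - μ₀| / (2 * β)) := by
  rcases le_total μ₀ μ₁ with hle | hle
  · exact bhattacharyya_laplace_aux μ₀ μ₁ β hβ hle
  · calc ∫ x : ℝ, Real.sqrt ((1 / (2 * β) * Real.exp (-|x - μ₀| / β))
        * (1 / (2 * β) * Real.exp (-|x - μ₁| / β)))
        = ∫ x : ℝ, Real.sqrt ((1 / (2 * β) * Real.exp (-|x - μ₁| / β))
        * (1 / (2 * β) * Real.exp (-|x - μ₀| / β))) := by
          congr 1; funext x; rw [mul_comm]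
      _ = Real.exp (-(|μ₀ - μ₁| / (2 * β))) * (1 + |μ₀ - μ₁| / (2 * β)) :=
          bhattacharyya_laplace_aux μ₁ μ₀ β hβ hle
      _ = Real.exp (-(|μ₁ - μ₀| / (2 * β))) * (1 + |μ₁ - μ₀| / (2 * β)) := by
          rw [abs_sub_comm]
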